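/- If f belongs to the class S*_B, then the second-order Hankel determinant H_{2,2}(f) = a_2·a_4 − a_3² satisfies |a_2·a_4 − a_3²| ≤ 1/4. -/

import Mathlib

open Complex Metric Set

section Helpers


lemma coeff_bridge {g : ℂ → ℂ} {p : FormalMultilinearSeries ℂ ℂ ℂ} {x : ℂ}
    (h : HasFPowerSeriesAt g p x) (n : ℕ) : p.coeff n = iteratedDeriv n g x / n.factorial := by
  obtain ⟨r, hr⟩ := h
  have h1 := hr.factorial_smul (1:ℂ) n
  rw [iteratedDeriv_eq_iteratedFDeriv, ← h1, FormalMultilinearSeries.coeff, nsmul_eq_mul]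
  rw [mul_comm, mul_div_assoc, div_self (by exact_mod_cast n.factorial_ne_zero), mul_one]
  rfl


lemma mobius_sq (a u : ℂ) :
    normSq (1 - (starRingEnd ℂ) a * u) - normSq (u - a) = (1 - normSq a) * (1 - normSq u) := by
  have key : ((normSq (1 - (starRingEnd ℂ) a * u) - normSq (u - a) : ℝ) : ℂ)
      = (((1 - normSq a) * (1 - normSq u) : ℝ) : ℂ) := by
    push_cast
    rw [← Complex.mul_conj, ← Complex.mul_conj, ← Complex.mul_conj, ← Complex.mul_conj]
    simp only [map_sub, map_mul, map_one, Complex.conj_conj]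
    ring
  exact_mod_cast key

lemma normSq_lt_one {a : ℂ} (h : ‖a‖ < 1) : normSq a < 1 := by
  have := Complex.sq_norm a
  nlinarith [norm_nonneg a]

lemma mobius_denom_ne {a u : ℂ} (ha : ‖a‖ < 1) (hu : ‖u‖ ≤ 1) :
    (1 : ℂ) - (starRingEnd ℂ) a * u ≠ 0 := by
  have h1 : ‖(starRingEnd ℂ) a * u‖ < 1 := by
    rw [norm_mul, Complex.norm_conj]
    calc ‖a‖ * ‖u‖ ≤ ‖a‖ * 1 :=
          mul_le_mul_of_nonneg_left hu (norm_nonneg a)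
      _ < 1 := by simpa using ha
  intro h
  have : (1 : ℂ) = (starRingEnd ℂ) a * u := by linear_combination h
  rw [← this] at h1
  simp at h1

lemma mobius_lt {a u : ℂ} (ha : ‖a‖ < 1) (hu : ‖u‖ < 1) :
    ‖(u - a) / (1 - (starRingEnd ℂ) a * u)‖ < 1 := by
  have h1 := mobius_sq a u
  have h2 : (0:ℝ) < (1 - normSq a) * (1 - normSq u) :=
    mul_pos (by linarith [normSq_lt_one ha]) (by linarith [normSq_lt_one hu])
  have h3 : normSq (u - a) < normSq (1 - (starRingEnd ℂ) a * u) := by linarith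
  have h4 : ‖u - a‖ < ‖1 - (starRingEnd ℂ) a * u‖ := by
    have e1 := Complex.sq_norm (u - a)
    have e2 := Complex.sq_norm (1 - (starRingEnd ℂ) a * u)
    nlinarith [norm_nonneg (u - a), norm_nonneg (1 - (starRingEnd ℂ) a * u)]
  rw [norm_div, div_lt_one (lt_of_le_of_lt (norm_nonneg _) h4)]
  exact h4

lemma schwarz_pick_zero {g : ℂ → ℂ} (hd : DifferentiableOn ℂ g (ball 0 1))
    (hb : ∀ z ∈ ball (0:ℂ) 1, ‖g z‖ ≤ 1) :
    ‖deriv g 0‖ ≤ 1 - ‖g 0‖ ^ 2 := by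
  by_cases hc : ∃ z₀ ∈ ball (0:ℂ) 1, ‖g z₀‖ = 1
  · obtain ⟨z₀, hz₀, he⟩ := hc
    have hmax : IsMaxOn (norm ∘ g) (ball 0 1) z₀ := fun z hz => by
      simp only [Function.comp_apply, he]
      exact hb z hz
    have heq := Complex.eqOn_of_isPreconnected_of_isMaxOn_norm
      (convex_ball (0:ℂ) 1).isPreconnected isOpen_ball hd hz₀ hmax
    have hder : deriv g 0 = 0 := by
      have hev : g =ᶠ[nhds (0:ℂ)] fun _ => g z₀ :=
        Filter.eventuallyEq_of_mem (isOpen_ball.mem_nhds (by simp)) heq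
      rw [hev.deriv_eq]
      exact deriv_const _ _
    rw [hder]
    have h0 : ‖g 0‖ ≤ 1 := hb 0 (by simp)
    simp only [norm_zero]
    nlinarith [norm_nonneg (g 0)]
  · push_neg at hc
    have hlt : ∀ z ∈ ball (0:ℂ) 1, ‖g z‖ < 1 :=
      fun z hz => lt_of_le_of_ne (hb z hz) (hc z hz)
    set b := g 0 with hb0
    have hblt : ‖b‖ < 1 := hlt 0 (by simp)
    set χ := fun z => (g z - b) / (1 - (starRingEnd ℂ) b * g z) with hχ
    have hden : ∀ z ∈ ball (0:ℂ) 1, (1:ℂ) - (starRingEnd ℂ) b * g z ≠ 0 :=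
      fun z hz => mobius_denom_ne hblt (hb z hz)
    have hχd : DifferentiableOn ℂ χ (ball 0 1) :=
      (hd.sub_const b).div ((differentiableOn_const 1).sub (hd.const_mul _)) hden
    have hχ0 : χ 0 = 0 := by simp [hχ, ← hb0]
    have hχlt : MapsTo χ (ball 0 1) (ball (χ 0) 1) := by
      intro z hz
      rw [hχ0, mem_ball, dist_zero_right]
      exact mobius_lt hblt (hlt z hz)
    have hbd : ‖deriv χ 0‖ ≤ 1 := by
      have := Complex.norm_deriv_le_div_of_mapsTo_ball hχd (hχlt.mono_right ball_subset_closedBall) one_pos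
      simpa using this
    have hg0 : HasDerivAt g (deriv g 0) 0 :=
      (hd.differentiableAt (isOpen_ball.mem_nhds (by simp))).hasDerivAt
    have hnsq : (1:ℂ) - (starRingEnd ℂ) b * b = ((1 - normSq b : ℝ) : ℂ) := by
      push_cast
      rw [← Complex.mul_conj]
      ring
    have hnsqpos : (0:ℝ) < 1 - normSq b := by linarith [normSq_lt_one hblt]
    have hdχ : HasDerivAt χ (deriv g 0 / ((1 - normSq b : ℝ) : ℂ)) 0 := by
      have hu : HasDerivAt (fun z => g z - b) (deriv g 0) 0 := hg0.sub_const b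
      have hv : HasDerivAt (fun z => (1:ℂ) - (starRingEnd ℂ) b * g z)
          (-((starRingEnd ℂ) b * deriv g 0)) 0 := by
        simpa using ((hg0.const_mul ((starRingEnd ℂ) b)).const_sub 1)
      have hv0 : (1:ℂ) - (starRingEnd ℂ) b * g 0 ≠ 0 := hden 0 (by simp)
      have := hu.div hv hv0
      refine this.congr_deriv ?_
      have hne : ((1 - normSq b : ℝ):ℂ) ≠ 0 := by exact_mod_cast hnsqpos.ne'
      rw [← hb0, sub_self, zero_mul, sub_zero, hnsq, pow_two, mul_div_mul_right _ _ hne]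
    have hder : deriv χ 0 = deriv g 0 / ((1 - normSq b : ℝ) : ℂ) := hdχ.deriv
    rw [hder] at hbd
    rw [norm_div] at hbd
    have habs : ‖((1 - normSq b : ℝ) : ℂ)‖ = 1 - normSq b := by
      rw [Complex.norm_real, Real.norm_eq_abs, abs_of_pos hnsqpos]
    rw [habs, div_le_one hnsqpos] at hbd
    have : ‖g 0‖ ^ 2 = normSq b := by rw [← hb0, Complex.sq_norm]
    rw [this]
    linarith

lemma hasDerivAt_iterated {F : ℂ → ℂ} {s : Set ℂ} (hF : AnalyticOnNhd ℂ F s)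
    (k : ℕ) {z : ℂ} (hz : z ∈ s) : HasDerivAt (iteratedDeriv k F) (iteratedDeriv (k+1) F z) z := by
  have h1 : AnalyticOnNhd ℂ (iteratedDeriv k F) s := by
    rw [iteratedDeriv_eq_iterate]; exact hF.iterated_deriv k
  have h := ((h1 z hz).differentiableAt).hasDerivAt
  rwa [← iteratedDeriv_succ] at h

lemma schwarz_coeffs {w : ℂ → ℂ} (hd : DifferentiableOn ℂ w (ball 0 1)) (h0 : w 0 = 0)
    (hlt : ∀ z ∈ ball (0:ℂ) 1, ‖w z‖ < 1) :
    ∃ d1 d2 : ℂ, ‖iteratedDeriv 1 w 0‖ ≤ 1 ∧ ‖d1‖ ≤ 1 ∧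
      ‖d2‖ ≤ 1 - ‖d1‖ ^ 2 ∧
      iteratedDeriv 2 w 0 / 2 = ((1 - normSq (iteratedDeriv 1 w 0) : ℝ) : ℂ) * d1 ∧
      iteratedDeriv 3 w 0 / 6 = ((1 - normSq (iteratedDeriv 1 w 0) : ℝ) : ℂ) * d2
        - (starRingEnd ℂ) (iteratedDeriv 1 w 0) * d1 * (iteratedDeriv 2 w 0 / 2) := by
  have h0m : (0:ℂ) ∈ ball (0:ℂ) 1 := by simp
  have hnhds : ball (0:ℂ) 1 ∈ nhds (0:ℂ) := isOpen_ball.mem_nhds h0m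
  set φ := dslope w 0 with hφdef
  have φd : DifferentiableOn ℂ φ (ball 0 1) := (differentiableOn_dslope hnhds).mpr hd
  obtain ⟨q, hq⟩ : AnalyticAt ℂ w 0 := (hd.analyticOnNhd isOpen_ball) 0 h0m
  have hqc : ∀ n, q.coeff n = iteratedDeriv n w 0 / n.factorial := coeff_bridge hq
  have hφs : HasFPowerSeriesAt φ q.fslope 0 := hq.has_fpower_series_dslope_fslope
  have φ0 : φ 0 = iteratedDeriv 1 w 0 := by
    rw [hφdef, dslope_same, iteratedDeriv_one]
  have wmaps : MapsTo w (ball 0 1) (ball (w 0) 1) := by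
    intro z hz
    rw [h0, mem_ball, dist_zero_right]
    exact hlt z hz
  have φle : ∀ z ∈ ball (0:ℂ) 1, ‖φ z‖ ≤ 1 := fun z hz => by
    have := Complex.norm_dslope_le_div_of_mapsTo_ball hd (wmaps.mono_right ball_subset_closedBall) hz
    simpa using this
  have hC1 : ‖iteratedDeriv 1 w 0‖ ≤ 1 := by
    rw [← φ0]; exact φle 0 h0m
  have hderφ : deriv φ 0 = iteratedDeriv 2 w 0 / 2 := by
    have := hφs.deriv
    rw [this]
    have : (q.fslope 1 fun _ => 1) = q.fslope.coeff 1 := rfl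
    rw [this, q.coeff_fslope, hqc 2]
    norm_num
  have hiterφ : iteratedDeriv 2 φ 0 = iteratedDeriv 3 w 0 / 3 := by
    have h1 := coeff_bridge hφs 2
    rw [q.coeff_fslope, hqc 3] at h1
    have h1' : iteratedDeriv 3 w 0 / 6 = iteratedDeriv 2 φ 0 / 2 := by
      simpa [Nat.factorial] using h1
    linear_combination (-2 : ℂ) * h1'
  by_cases hc : ∃ z₀ ∈ ball (0:ℂ) 1, ‖φ z₀‖ = 1
  · -- φ is constant
    obtain ⟨z₀, hz₀, he⟩ := hc
    have hmax : IsMaxOn (norm ∘ φ) (ball 0 1) z₀ := fun z hz => by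
      simp only [Function.comp_apply, he]
      exact φle z hz
    have heq := Complex.eqOn_of_isPreconnected_of_isMaxOn_norm
      (convex_ball (0:ℂ) 1).isPreconnected isOpen_ball φd hz₀ hmax
    have hev : φ =ᶠ[nhds (0:ℂ)] fun _ => φ z₀ := Filter.eventuallyEq_of_mem hnhds heq
    have hd1 : deriv φ 0 = 0 := by rw [hev.deriv_eq]; exact deriv_const _ _
    have hd2 : iteratedDeriv 2 φ 0 = 0 := by
      rw [hev.iteratedDeriv_eq 2]
      simp [iteratedDeriv_succ', deriv_const']
    refine ⟨0, 0, hC1, by simp, by simp, ?_, ?_⟩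
    · rw [← hderφ, hd1, mul_zero]
    · have : iteratedDeriv 3 w 0 = 0 := by
        have := hiterφ
        rw [hd2] at this
        field_simp at this
        simpa using this.symm
      rw [this]
      simp
  · push_neg at hc
    have φlt : ∀ z ∈ ball (0:ℂ) 1, ‖φ z‖ < 1 :=
      fun z hz => lt_of_le_of_ne (φle z hz) (hc z hz)
    set b := φ 0 with hbdef
    have hblt : ‖b‖ < 1 := φlt 0 h0m
    set ψ := fun z => (φ z - b) / (1 - (starRingEnd ℂ) b * φ z) with hψdef
    have hden : ∀ z ∈ ball (0:ℂ) 1, (1:ℂ) - (starRingEnd ℂ) b * φ z ≠ 0 :=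
      fun z hz => mobius_denom_ne hblt (φle z hz)
    have ψd : DifferentiableOn ℂ ψ (ball 0 1) :=
      (φd.sub_const b).div ((differentiableOn_const 1).sub (φd.const_mul _)) hden
    have ψ0 : ψ 0 = 0 := by simp [hψdef, ← hbdef]
    have ψlt : ∀ z ∈ ball (0:ℂ) 1, ‖ψ z‖ < 1 :=
      fun z hz => mobius_lt hblt (φlt z hz)
    set d1 := deriv ψ 0 with hd1def
    set d2 := iteratedDeriv 2 ψ 0 / 2 with hd2def
    have ψmaps : MapsTo ψ (ball 0 1) (ball (ψ 0) 1) := by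
      intro z hz
      rw [ψ0, mem_ball, dist_zero_right]
      exact ψlt z hz
    have hd1le : ‖d1‖ ≤ 1 := by
      have := Complex.norm_deriv_le_div_of_mapsTo_ball ψd (ψmaps.mono_right ball_subset_closedBall) one_pos
      simpa using this
    -- θ := dslope ψ 0
    obtain ⟨r, hr⟩ : AnalyticAt ℂ ψ 0 := (ψd.analyticOnNhd isOpen_ball) 0 h0m
    set θ := dslope ψ 0 with hθdef
    have θd : DifferentiableOn ℂ θ (ball 0 1) := (differentiableOn_dslope hnhds).mpr ψd
    have θle : ∀ z ∈ ball (0:ℂ) 1, ‖θ z‖ ≤ 1 := fun z hz => by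
      have := Complex.norm_dslope_le_div_of_mapsTo_ball ψd (ψmaps.mono_right ball_subset_closedBall) hz
      simpa using this
    have θ0 : θ 0 = d1 := by rw [hθdef, dslope_same, hd1def]
    have hθs : HasFPowerSeriesAt θ r.fslope 0 := hr.has_fpower_series_dslope_fslope
    have hderθ : deriv θ 0 = d2 := by
      rw [hθs.deriv]
      have : (r.fslope 1 fun _ => 1) = r.fslope.coeff 1 := rfl
      rw [this, r.coeff_fslope, coeff_bridge hr 2, hd2def]
      norm_num
    have hd2le : ‖d2‖ ≤ 1 - ‖d1‖ ^ 2 := by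
      have := schwarz_pick_zero θd θle
      rwa [hderθ, θ0] at this
    -- coefficient relations from ψ * (1 - conj b * φ) = φ - b
    have φan : AnalyticOnNhd ℂ φ (ball 0 1) := φd.analyticOnNhd isOpen_ball
    have ψan : AnalyticOnNhd ℂ ψ (ball 0 1) := ψd.analyticOnNhd isOpen_ball
    have hEq : Set.EqOn (fun z => ψ z * (1 - (starRingEnd ℂ) b * φ z)) (fun z => φ z - b)
        (ball 0 1) := by
      intro z hz
      simp only [hψdef]
      rw [div_mul_cancel₀ _ (hden z hz)]
    have hψz : ∀ k, ∀ z ∈ ball (0:ℂ) 1, HasDerivAt (iteratedDeriv k ψ)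
        (iteratedDeriv (k+1) ψ z) z := fun k z hz => hasDerivAt_iterated ψan k hz
    have hφz : ∀ k, ∀ z ∈ ball (0:ℂ) 1, HasDerivAt (iteratedDeriv k φ)
        (iteratedDeriv (k+1) φ z) z := fun k z hz => hasDerivAt_iterated φan k hz
    have hψ0' : ∀ z ∈ ball (0:ℂ) 1, HasDerivAt ψ (iteratedDeriv 1 ψ z) z := fun z hz => by
      have := hψz 0 z hz
      rwa [iteratedDeriv_zero] at this
    have hφ0' : ∀ z ∈ ball (0:ℂ) 1, HasDerivAt φ (iteratedDeriv 1 φ z) z := fun z hz => by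
      have := hφz 0 z hz
      rwa [iteratedDeriv_zero] at this
    -- derivative of the product identity
    have hstep : Set.EqOn (deriv (fun z => ψ z * (1 - (starRingEnd ℂ) b * φ z)))
        (fun z => iteratedDeriv 1 ψ z * (1 - (starRingEnd ℂ) b * φ z)
          - ψ z * ((starRingEnd ℂ) b * iteratedDeriv 1 φ z)) (ball 0 1) := by
      intro z hz
      have h1 : HasDerivAt (fun z => ψ z * (1 - (starRingEnd ℂ) b * φ z))
          (iteratedDeriv 1 ψ z * (1 - (starRingEnd ℂ) b * φ z)
            - ψ z * ((starRingEnd ℂ) b * iteratedDeriv 1 φ z)) z := by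
        have h2 := (hψ0' z hz).mul (((hφ0' z hz).const_mul ((starRingEnd ℂ) b)).const_sub 1)
        refine h2.congr_deriv ?_
        ring
      exact h1.deriv
    have hnsq : (1:ℂ) - (starRingEnd ℂ) b * b = ((1 - normSq b : ℝ) : ℂ) := by
      push_cast
      rw [← Complex.mul_conj]
      ring
    -- order 1
    have rel1 : d1 * ((1 - normSq b : ℝ) : ℂ) = iteratedDeriv 2 w 0 / 2 := by
      have e1 : deriv (fun z => ψ z * (1 - (starRingEnd ℂ) b * φ z)) 0
          = deriv (fun z => φ z - b) 0 := by
        have := (hEq.iteratedDeriv_of_isOpen isOpen_ball 1) h0m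
        rwa [iteratedDeriv_one, iteratedDeriv_one] at this
      have e2 : deriv (fun z => ψ z * (1 - (starRingEnd ℂ) b * φ z)) 0
          = d1 * ((1 - normSq b : ℝ) : ℂ) := by
        rw [hstep h0m]
        simp only [ψ0, zero_mul, mul_zero, sub_zero]
        rw [← hbdef, hnsq]
        congr 1
        rw [iteratedDeriv_one, hd1def]
      have e3 : deriv (fun z => φ z - b) 0 = iteratedDeriv 2 w 0 / 2 := by
        rw [← hderφ]
        have := ((hφ0' 0 h0m).sub_const b).deriv
        rw [this, iteratedDeriv_one]
      rw [← e2, e1, e3]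
    -- order 2
    have rel2 : 2 * d2 * ((1 - normSq b : ℝ) : ℂ)
        - 2 * d1 * ((starRingEnd ℂ) b) * (iteratedDeriv 2 w 0 / 2)
        = iteratedDeriv 3 w 0 / 3 := by
      have eL : iteratedDeriv 2 (fun z => ψ z * (1 - (starRingEnd ℂ) b * φ z)) 0
          = iteratedDeriv 2 ψ 0 * ((1 - normSq b : ℝ) : ℂ)
            - 2 * d1 * ((starRingEnd ℂ) b) * (iteratedDeriv 2 w 0 / 2) := by
        rw [iteratedDeriv_succ']
        have := (hstep.iteratedDeriv_of_isOpen isOpen_ball 1) h0m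
        rw [this, iteratedDeriv_one]
        have h1 : HasDerivAt (fun z => iteratedDeriv 1 ψ z * (1 - (starRingEnd ℂ) b * φ z)
            - ψ z * ((starRingEnd ℂ) b * iteratedDeriv 1 φ z))
            (iteratedDeriv 2 ψ 0 * (1 - (starRingEnd ℂ) b * φ 0)
              - iteratedDeriv 1 ψ 0 * ((starRingEnd ℂ) b * iteratedDeriv 1 φ 0)
              - (iteratedDeriv 1 ψ 0 * ((starRingEnd ℂ) b * iteratedDeriv 1 φ 0)
                + ψ 0 * ((starRingEnd ℂ) b * iteratedDeriv 2 φ 0))) 0 := by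
          have ha := (hψz 1 0 h0m).mul (((hφ0' 0 h0m).const_mul ((starRingEnd ℂ) b)).const_sub 1)
          have hb2 := (hψ0' 0 h0m).mul ((hφz 1 0 h0m).const_mul ((starRingEnd ℂ) b))
          have := ha.sub hb2
          refine this.congr_deriv ?_
          ring
        rw [h1.deriv]
        rw [ψ0, ← hbdef, hnsq]
        have hi1 : iteratedDeriv 1 ψ 0 = d1 := by rw [iteratedDeriv_one, hd1def]
        have hi2 : iteratedDeriv 1 φ 0 = iteratedDeriv 2 w 0 / 2 := by
          rw [iteratedDeriv_one, hderφ]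
        rw [hi1, hi2]
        ring
      have eR : iteratedDeriv 2 (fun z => φ z - b) 0 = iteratedDeriv 3 w 0 / 3 := by
        rw [iteratedDeriv_succ']
        have hstep2 : Set.EqOn (deriv (fun z => φ z - b)) (iteratedDeriv 1 φ) (ball 0 1) := by
          intro z hz
          have := ((hφ0' z hz).sub_const b).deriv
          rw [this]
        have := (hstep2.iteratedDeriv_of_isOpen isOpen_ball 1) h0m
        rw [this, iteratedDeriv_one, ← iteratedDeriv_succ, hiterφ]
      have := (hEq.iteratedDeriv_of_isOpen isOpen_ball 2) h0m
      rw [eL, eR] at this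
      rw [← this, hd2def]
      ring
    refine ⟨d1, d2, hC1, hd1le, hd2le, ?_, ?_⟩
    · rw [← φ0]
      linear_combination -rel1
    · rw [← φ0]
      linear_combination (-1/2 : ℂ) * rel2


lemma habs_sub (a b : ℂ) : ‖a - b‖ ≤ ‖a‖ + ‖b‖ := by
  simpa [sub_eq_add_neg] using norm_add_le a (-b)

lemma final_bound (c1 c2 c3 d1 d2 : ℂ)
    (h1 : ‖c1‖ ≤ 1) (h2 : ‖d1‖ ≤ 1)
    (h3 : ‖d2‖ ≤ 1 - ‖d1‖ ^ 2)
    (e1 : c2 = ((1 - normSq c1 : ℝ) : ℂ) * d1)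
    (e2 : c3 = ((1 - normSq c1 : ℝ) : ℂ) * d2 - (starRingEnd ℂ) c1 * d1 * c2) :
    ‖c1 * c3 / 3 - c2 ^ 2 / 4 + c1 ^ 2 * c2 / 12 - 5 * c1 ^ 4 / 144‖ ≤ 1 / 4 := by
  set x := ‖c1‖ with hx
  set t := ‖d1‖ with ht
  set u := ‖d2‖ with hu
  have hx0 : 0 ≤ x := norm_nonneg c1
  have ht0 : 0 ≤ t := norm_nonneg d1
  have hu0 : 0 ≤ u := norm_nonneg d2
  have hs : (1 - normSq c1 : ℝ) = 1 - x ^ 2 := by rw [hx, Complex.sq_norm]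
  have hs0 : (0:ℝ) ≤ 1 - x ^ 2 := by nlinarith
  have habs2 : ‖c2‖ = (1 - x ^ 2) * t := by
    rw [e1, norm_mul, Complex.norm_real, Real.norm_eq_abs, hs, _root_.abs_of_nonneg hs0, ht]
  have habs3 : ‖c3‖ ≤ (1 - x ^ 2) * u + x * t * ((1 - x ^ 2) * t) := by
    rw [e2]
    refine le_trans (habs_sub _ _) ?_
    gcongr
    · rw [norm_mul, Complex.norm_real, Real.norm_eq_abs, hs, _root_.abs_of_nonneg hs0, hu]
    · rw [norm_mul, norm_mul, Complex.norm_conj, ← hx, ← ht, habs2]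
  have tri : ‖c1 * c3 / 3 - c2 ^ 2 / 4 + c1 ^ 2 * c2 / 12 - 5 * c1 ^ 4 / 144‖
      ≤ x * ‖c3‖ / 3 + ((1 - x^2) * t) ^ 2 / 4 + x ^ 2 * ((1 - x^2) * t) / 12
        + 5 * x ^ 4 / 144 := by
    refine le_trans (habs_sub _ _) ?_
    have t2 := norm_add_le (c1 * c3 / 3 - c2 ^ 2 / 4) (c1 ^ 2 * c2 / 12)
    have t3 := habs_sub (c1 * c3 / 3) (c2 ^ 2 / 4)
    have e3 : ‖c1 * c3 / 3‖ = x * ‖c3‖ / 3 := by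
      rw [norm_div, norm_mul, ← hx]; norm_num
    have e4 : ‖c2 ^ 2 / 4‖ = ((1 - x^2) * t) ^ 2 / 4 := by
      rw [norm_div, norm_pow, habs2]; norm_num
    have e5 : ‖c1 ^ 2 * c2 / 12‖ = x ^ 2 * ((1 - x^2) * t) / 12 := by
      rw [norm_div, norm_mul, norm_pow, habs2, ← hx]; norm_num
    have e6 : ‖5 * c1 ^ 4 / 144‖ = 5 * x ^ 4 / 144 := by
      rw [norm_div, norm_mul, norm_pow, ← hx]; norm_num
    rw [e6]
    gcongr
    refine le_trans t2 ?_
    rw [e5]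
    gcongr
    refine le_trans t3 ?_
    rw [e3, e4]
  refine le_trans tri ?_
  have hc3 : x * ‖c3‖ / 3 ≤ x * ((1 - x ^ 2) * u + x * t * ((1 - x ^ 2) * t)) / 3 := by
    gcongr
  refine le_trans (by linarith : x * ‖c3‖ / 3 + ((1 - x^2) * t) ^ 2 / 4
      + x ^ 2 * ((1 - x^2) * t) / 12 + 5 * x ^ 4 / 144
      ≤ x * ((1 - x ^ 2) * u + x * t * ((1 - x ^ 2) * t)) / 3 + ((1 - x^2) * t) ^ 2 / 4
      + x ^ 2 * ((1 - x^2) * t) / 12 + 5 * x ^ 4 / 144) ?_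
  have key : (1:ℝ)/4 - (x * ((1 - x ^ 2) * u + x * t * ((1 - x ^ 2) * t)) / 3
      + ((1 - x^2) * t) ^ 2 / 4 + x ^ 2 * ((1 - x^2) * t) / 12 + 5 * x ^ 4 / 144)
      = x * (1 - x^2) * (1 - t^2 - u) / 3 + (1 - x^2) * (1 - x) * (3 - x) * (1 - t^2) / 12
        + x^2 * (1 - x^2) * (1 - t) / 12 + x^2 / 12 + 19 * x^4 / 144 := by
    ring
  have h1t : (0:ℝ) ≤ 1 - t^2 := by nlinarith
  have hterm1 : (0:ℝ) ≤ x * (1 - x^2) * (1 - t^2 - u) / 3 := by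
    have : u ≤ 1 - t^2 := h3
    have : (0:ℝ) ≤ 1 - t^2 - u := by linarith
    positivity
  have hterm2 : (0:ℝ) ≤ (1 - x^2) * (1 - x) * (3 - x) * (1 - t^2) / 12 := by
    have h1x : (0:ℝ) ≤ 1 - x := by linarith
    have h3x : (0:ℝ) ≤ 3 - x := by linarith
    positivity
  have hterm3 : (0:ℝ) ≤ x^2 * (1 - x^2) * (1 - t) / 12 := by
    have h1t' : (0:ℝ) ≤ 1 - t := by linarith
    positivity
  nlinarith [sq_nonneg x, sq_nonneg (x^2)]

lemma iter_step {F G : ℂ → ℂ} (h : Set.EqOn (deriv F) G (ball (0:ℂ) 1)) (n : ℕ) :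
    iteratedDeriv (n+1) F 0 = iteratedDeriv n G 0 := by
  rw [iteratedDeriv_succ']
  exact (h.iteratedDeriv_of_isOpen isOpen_ball n) (by simp)

lemma iter_iter (m k : ℕ) (h : ℂ → ℂ) :
    iteratedDeriv m (iteratedDeriv k h) = iteratedDeriv (m+k) h := by
  rw [iteratedDeriv_eq_iterate, iteratedDeriv_eq_iterate, iteratedDeriv_eq_iterate,
    Function.iterate_add_apply]


end Helpers

/-- The `n`-th Taylor coefficient of `f` at `0`. -/
noncomputable def taylorCoeff (f : ℂ → ℂ) (n : ℕ) : ℂ :=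
  iteratedDeriv n f 0 / n.factorial

/-- Membership in the class `S*_B`: `f` is analytic on the unit disk, normalized by
`f(0) = 0` and `f'(0) = 1`, and there is a Schwarz function `w` with
`z f'(z) (1 - log(1 + w z)) = f z` on the unit disk. -/
def IsSB (f : ℂ → ℂ) : Prop :=
  DifferentiableOn ℂ f (ball (0:ℂ) 1) ∧ f 0 = 0 ∧ deriv f 0 = 1 ∧
  ∃ w : ℂ → ℂ, DifferentiableOn ℂ w (ball (0:ℂ) 1) ∧ w 0 = 0 ∧
    (∀ z ∈ ball (0:ℂ) 1, ‖w z‖ < 1) ∧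
    (∀ z ∈ ball (0:ℂ) 1, z * deriv f z * (1 - Complex.log (1 + w z)) = f z)
theorem hankel_H22 (f : ℂ → ℂ) (hf : IsSB f) :
    ‖taylorCoeff f 2 * taylorCoeff f 4 - (taylorCoeff f 3) ^ 2‖ ≤ 1 / 4 := by
  obtain ⟨hfd, hf0, hf1, w, hwd, hw0, hwlt, heqn⟩ := hf
  have h0m : (0:ℂ) ∈ ball (0:ℂ) 1 := by simp
  have fan : AnalyticOnNhd ℂ f (ball 0 1) := hfd.analyticOnNhd isOpen_ball
  have wan : AnalyticOnNhd ℂ w (ball 0 1) := hwd.analyticOnNhd isOpen_ball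
  have hslit : ∀ z ∈ ball (0:ℂ) 1, (1 + w z) ∈ Complex.slitPlane := by
    intro z hz
    rw [Complex.mem_slitPlane_iff]
    left
    have h1 : |(w z).re| ≤ ‖w z‖ := Complex.abs_re_le_norm _
    have h2 := hwlt z hz
    simp only [Complex.add_re, Complex.one_re]
    cases' abs_le.mp h1 with hl hr
    linarith
  have hne : ∀ z ∈ ball (0:ℂ) 1, (1:ℂ) + w z ≠ 0 :=
    fun z hz => Complex.slitPlane_ne_zero (hslit z hz)
  set L : ℂ → ℂ := fun z => Complex.log (1 + w z) with hLdef
  have Lan : AnalyticOnNhd ℂ L (ball 0 1) := fun z hz =>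
    (analyticAt_const.add (wan z hz)).clog (hslit z hz)
  have L0 : L 0 = 0 := by rw [hLdef]; simp [hw0]
  -- basic HasDerivAt facts
  have hfz : ∀ (k : ℕ), ∀ z ∈ ball (0:ℂ) 1,
      HasDerivAt (iteratedDeriv k f) (iteratedDeriv (k+1) f z) z :=
    fun k z hz => hasDerivAt_iterated fan k hz
  have hwz : ∀ (k : ℕ), ∀ z ∈ ball (0:ℂ) 1,
      HasDerivAt (iteratedDeriv k w) (iteratedDeriv (k+1) w z) z :=
    fun k z hz => hasDerivAt_iterated wan k hz
  have hLz : ∀ (k : ℕ), ∀ z ∈ ball (0:ℂ) 1,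
      HasDerivAt (iteratedDeriv k L) (iteratedDeriv (k+1) L z) z :=
    fun k z hz => hasDerivAt_iterated Lan k hz
  have hw' : ∀ z ∈ ball (0:ℂ) 1, HasDerivAt w (iteratedDeriv 1 w z) z := fun z hz => by
    have := hwz 0 z hz; rwa [iteratedDeriv_zero] at this
  have hL' : ∀ z ∈ ball (0:ℂ) 1, HasDerivAt L (iteratedDeriv 1 L z) z := fun z hz => by
    have := hLz 0 z hz; rwa [iteratedDeriv_zero] at this
  -- the log-derivative relation
  have hLd : ∀ z ∈ ball (0:ℂ) 1, HasDerivAt L (iteratedDeriv 1 w z / (1 + w z)) z := by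
    intro z hz
    exact HasDerivAt.clog ((hw' z hz).const_add 1) (hslit z hz)
  have hL1 : Set.EqOn (iteratedDeriv 1 L) (fun z => iteratedDeriv 1 w z / (1 + w z))
      (ball 0 1) := by
    intro z hz
    rw [iteratedDeriv_one]
    exact (hLd z hz).deriv
  set P0 : ℂ → ℂ := fun z => iteratedDeriv 1 L z * (1 + w z) with hP0def
  set P1 : ℂ → ℂ := fun z => iteratedDeriv 2 L z * (1 + w z)
      + iteratedDeriv 1 L z * iteratedDeriv 1 w z with hP1def
  have E2 : Set.EqOn P0 (iteratedDeriv 1 w) (ball 0 1) := by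
    intro z hz
    rw [hP0def]
    simp only
    rw [hL1 hz, div_mul_cancel₀ _ (hne z hz)]
  have hP01 : Set.EqOn (deriv P0) P1 (ball 0 1) := by
    intro z hz
    have h1 : HasDerivAt P0 (P1 z) z := by
      have h2 := (hLz 1 z hz).mul ((hw' z hz).const_add 1)
      rw [hP0def, hP1def]
      exact h2
    exact h1.deriv
  set Λ1 := iteratedDeriv 1 L 0 with hΛ1d
  set Λ2 := iteratedDeriv 2 L 0 with hΛ2d
  set Λ3 := iteratedDeriv 3 L 0 with hΛ3d
  set C1 := iteratedDeriv 1 w 0 with hC1d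
  set C2 := iteratedDeriv 2 w 0 with hC2d
  set C3 := iteratedDeriv 3 w 0 with hC3d
  set A2 := iteratedDeriv 2 f 0 with hA2d
  set A3 := iteratedDeriv 3 f 0 with hA3d
  set A4 := iteratedDeriv 4 f 0 with hA4d
  have hA1 : iteratedDeriv 1 f 0 = 1 := by rw [iteratedDeriv_one]; exact hf1
  have j1 : Λ1 = C1 := by
    have h := E2 h0m
    rw [hP0def] at h
    simp only at h
    rw [hw0, add_zero, mul_one] at h
    exact h
  have j2 : Λ2 + Λ1 * C1 = C2 := by
    have h := (E2.iteratedDeriv_of_isOpen isOpen_ball 1) h0m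
    rw [iter_step hP01 0, iteratedDeriv_zero] at h
    rw [iter_iter 1 1] at h
    rw [hP1def] at h
    simp only at h
    rw [hw0, add_zero, mul_one] at h
    exact h
  have j3 : Λ3 + 2 * Λ2 * C1 + Λ1 * C2 = C3 := by
    have h := (E2.iteratedDeriv_of_isOpen isOpen_ball 2) h0m
    rw [iter_step hP01 1, iter_iter 2 1] at h
    rw [iteratedDeriv_one] at h
    have hd : HasDerivAt P1 (iteratedDeriv 3 L 0 * (1 + w 0) + iteratedDeriv 2 L 0 * iteratedDeriv 1 w 0
        + (iteratedDeriv 2 L 0 * iteratedDeriv 1 w 0 + iteratedDeriv 1 L 0 * iteratedDeriv 2 w 0)) 0 := by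
      have ha := (hLz 2 0 h0m).mul ((hw' 0 h0m).const_add 1)
      have hb := (hLz 1 0 h0m).mul (hwz 1 0 h0m)
      have h2 := ha.add hb
      rw [hP1def]
      exact h2
    rw [hd.deriv] at h
    rw [hw0, add_zero, mul_one] at h
    linear_combination h
  -- the main functional equation
  set Q0 : ℂ → ℂ := fun z => z * iteratedDeriv 1 f z * (1 - L z) with hQ0def
  set Q1 : ℂ → ℂ := fun z => iteratedDeriv 1 f z * (1 - L z)
      + z * (iteratedDeriv 2 f z * (1 - L z) - iteratedDeriv 1 f z * iteratedDeriv 1 L z)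
      with hQ1def
  set Q2 : ℂ → ℂ := fun z => 2 * iteratedDeriv 2 f z * (1 - L z)
      - 2 * iteratedDeriv 1 f z * iteratedDeriv 1 L z
      + z * (iteratedDeriv 3 f z * (1 - L z) - 2 * iteratedDeriv 2 f z * iteratedDeriv 1 L z
        - iteratedDeriv 1 f z * iteratedDeriv 2 L z) with hQ2def
  set Q3 : ℂ → ℂ := fun z => 3 * iteratedDeriv 3 f z * (1 - L z)
      - 6 * iteratedDeriv 2 f z * iteratedDeriv 1 L z
      - 3 * iteratedDeriv 1 f z * iteratedDeriv 2 L z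
      + z * (iteratedDeriv 4 f z * (1 - L z) - 3 * iteratedDeriv 3 f z * iteratedDeriv 1 L z
        - 3 * iteratedDeriv 2 f z * iteratedDeriv 2 L z
        - iteratedDeriv 1 f z * iteratedDeriv 3 L z) with hQ3def
  have E1 : Set.EqOn Q0 f (ball 0 1) := by
    intro z hz
    rw [hQ0def]
    simp only [iteratedDeriv_one]
    exact heqn z hz
  have hf1' : ∀ z ∈ ball (0:ℂ) 1, HasDerivAt (iteratedDeriv 1 f) (iteratedDeriv 2 f z) z :=
    fun z hz => hfz 1 z hz
  have hQ01 : Set.EqOn (deriv Q0) Q1 (ball 0 1) := by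
    intro z hz
    have h1 : HasDerivAt Q0 (Q1 z) z := by
      have := ((hasDerivAt_id z).mul (hfz 1 z hz)).mul
        ((hasDerivAt_const z (1:ℂ)).sub (hL' z hz))
      rw [hQ0def, hQ1def]
      refine this.congr_deriv ?_
      simp only [id_eq, Pi.mul_apply, Pi.sub_apply, Pi.add_apply]
      ring
    exact h1.deriv
  have hQ12 : Set.EqOn (deriv Q1) Q2 (ball 0 1) := by
    intro z hz
    have h1 : HasDerivAt Q1 (Q2 z) z := by
      have ha := (hfz 1 z hz).mul ((hasDerivAt_const z (1:ℂ)).sub (hL' z hz))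
      have hb := (hasDerivAt_id z).mul
        (((hfz 2 z hz).mul ((hasDerivAt_const z (1:ℂ)).sub (hL' z hz))).sub
          ((hfz 1 z hz).mul (hLz 1 z hz)))
      have := ha.add hb
      rw [hQ1def, hQ2def]
      refine this.congr_deriv ?_
      simp only [id_eq, Pi.mul_apply, Pi.sub_apply, Pi.add_apply]
      ring
    exact h1.deriv
  have hQ23 : Set.EqOn (deriv Q2) Q3 (ball 0 1) := by
    intro z hz
    have h1 : HasDerivAt Q2 (Q3 z) z := by
      have ha := (((hfz 2 z hz).mul ((hasDerivAt_const z (1:ℂ)).sub (hL' z hz))).const_mul (2:ℂ))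
      have hb := (((hfz 1 z hz).mul (hLz 1 z hz)).const_mul (2:ℂ))
      have hc := (hasDerivAt_id z).mul
        ((((hfz 3 z hz).mul ((hasDerivAt_const z (1:ℂ)).sub (hL' z hz))).sub
          (((hfz 2 z hz).mul (hLz 1 z hz)).const_mul (2:ℂ))).sub
          ((hfz 1 z hz).mul (hLz 2 z hz)))
      have := (ha.sub hb).add hc
      rw [hQ2def, hQ3def]
      convert this using 1
      · rfl
      · rfl
      · funext x
        simp only [id_eq, Pi.mul_apply, Pi.sub_apply, Pi.add_apply]
        ring
      · simp only [id_eq, Pi.mul_apply, Pi.sub_apply, Pi.add_apply]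
        ring
    exact h1.deriv
  have m2 : 2 * A2 - 2 * Λ1 = A2 := by
    have h := (E1.iteratedDeriv_of_isOpen isOpen_ball 2) h0m
    rw [iter_step hQ01 1, iter_step hQ12 0, iteratedDeriv_zero] at h
    rw [hQ2def] at h
    simp only at h
    rw [L0, hA1] at h
    linear_combination h
  have m3 : 3 * A3 - 6 * A2 * Λ1 - 3 * Λ2 = A3 := by
    have h := (E1.iteratedDeriv_of_isOpen isOpen_ball 3) h0m
    rw [iter_step hQ01 2, iter_step hQ12 1, iter_step hQ23 0, iteratedDeriv_zero] at h
    rw [hQ3def] at h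
    simp only at h
    rw [L0, hA1] at h
    linear_combination h
  have m4 : 4 * A4 - 12 * A3 * Λ1 - 12 * A2 * Λ2 - 4 * Λ3 = A4 := by
    have h := (E1.iteratedDeriv_of_isOpen isOpen_ball 4) h0m
    rw [iter_step hQ01 3, iter_step hQ12 2, iter_step hQ23 1, iteratedDeriv_one] at h
    have hd : HasDerivAt Q3
        (3 * iteratedDeriv 4 f 0 * (1 - L 0) - 3 * iteratedDeriv 3 f 0 * iteratedDeriv 1 L 0
          - (6 * iteratedDeriv 3 f 0 * iteratedDeriv 1 L 0 + 6 * iteratedDeriv 2 f 0 * iteratedDeriv 2 L 0)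
          - (3 * iteratedDeriv 2 f 0 * iteratedDeriv 2 L 0 + 3 * iteratedDeriv 1 f 0 * iteratedDeriv 3 L 0)
          + (iteratedDeriv 4 f 0 * (1 - L 0) - 3 * iteratedDeriv 3 f 0 * iteratedDeriv 1 L 0
            - 3 * iteratedDeriv 2 f 0 * iteratedDeriv 2 L 0
            - iteratedDeriv 1 f 0 * iteratedDeriv 3 L 0)) 0 := by
      have ha := (((hfz 3 0 h0m).mul ((hasDerivAt_const (0:ℂ) (1:ℂ)).sub (hL' 0 h0m))).const_mul (3:ℂ))
      have hb := (((hfz 2 0 h0m).mul (hLz 1 0 h0m)).const_mul (6:ℂ))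
      have hc := (((hfz 1 0 h0m).mul (hLz 2 0 h0m)).const_mul (3:ℂ))
      have hd0 := (hasDerivAt_id (0:ℂ)).mul
        ((((hfz 4 0 h0m).mul ((hasDerivAt_const (0:ℂ) (1:ℂ)).sub (hL' 0 h0m))).sub
          (((hfz 3 0 h0m).mul (hLz 1 0 h0m)).const_mul (3:ℂ))).sub
          (((((hfz 2 0 h0m).mul (hLz 2 0 h0m)).const_mul (3:ℂ)).add
            ((hfz 1 0 h0m).mul (hLz 3 0 h0m)))))
      have := ((ha.sub hb).sub hc).add hd0
      rw [hQ3def]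
      convert this using 1
      · rfl
      · rfl
      · funext x
        simp only [id_eq, Pi.mul_apply, Pi.sub_apply, Pi.add_apply]
        ring
      · simp only [id_eq, Pi.mul_apply, Pi.sub_apply, Pi.add_apply]
        ring
    rw [hd.deriv] at h
    rw [L0, hA1] at h
    linear_combination h
  -- solve for coefficients
  have hA2e : A2 = 2 * C1 := by linear_combination m2 + 2 * j1
  have hΛ2e : Λ2 = C2 - C1 ^ 2 := by linear_combination j2 - C1 * j1
  have hA3e : A3 = (9/2) * C1 ^ 2 + (3/2) * C2 := by
    linear_combination (1/2) * m3 + (3/2) * hΛ2e + 3 * Λ1 * hA2e + 6 * C1 * j1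
  have hΛ3e : Λ3 = C3 - 3 * C1 * C2 + 2 * C1 ^ 3 := by
    linear_combination j3 - 2 * C1 * hΛ2e - C2 * j1
  have hA4e : A4 = (38/3) * C1 ^ 3 + 10 * C1 * C2 + (4/3) * C3 := by
    linear_combination (1/3) * m4 + (4/3) * hΛ3e + 4 * Λ1 * hA3e
      + (18 * C1 ^ 2 + 6 * C2) * j1 + 4 * Λ2 * hA2e + 8 * C1 * hΛ2e
  -- Schwarz coefficient bounds
  obtain ⟨d1, d2, hC1le, hd1le, hd2le, e1, e2⟩ := schwarz_coeffs hwd hw0 hwlt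
  rw [← hC1d, ← hC2d] at e1
  rw [← hC1d, ← hC2d, ← hC3d] at e2
  rw [← hC1d] at hC1le
  have key := final_bound C1 (C2 / 2) (C3 / 6) d1 d2 hC1le hd1le hd2le e1 e2
  have htay2 : taylorCoeff f 2 = A2 / 2 := by
    unfold taylorCoeff
    rw [← hA2d]
    norm_num [Nat.factorial]
  have htay3 : taylorCoeff f 3 = A3 / 6 := by
    unfold taylorCoeff
    rw [← hA3d]
    norm_num [Nat.factorial]
  have htay4 : taylorCoeff f 4 = A4 / 24 := by
    unfold taylorCoeff
    rw [← hA4d]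
    norm_num [Nat.factorial]
  have hgoal : taylorCoeff f 2 * taylorCoeff f 4 - taylorCoeff f 3 ^ 2
      = C1 * (C3 / 6) / 3 - (C2 / 2) ^ 2 / 4 + C1 ^ 2 * (C2 / 2) / 12 - 5 * C1 ^ 4 / 144 := by
    rw [htay2, htay3, htay4, hA2e, hA3e, hA4e]
    ring
  rw [hgoal]
  exact key
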